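/- For the uniform distribution over m ≥ 2 outcomes, the expected InfoNCE loss cannot be less than log m minus the mutual information between the positive-pair variables: E[L_con] ≥ log m − I(Z¹; Z²). -/

import Mathlib

open scoped BigOperators

/-- marginal of the first coordinate -/
noncomputable def margX {α β : Type*} [Fintype α] [Fintype β] (p : α × β → ℝ) (a : α) : ℝ :=
  ∑ b, p (a, b)

/-- marginal of the second coordinate -/
noncomputable def margY {α β : Type*} [Fintype α] [Fintype β] (p : α × β → ℝ) (b : β) : ℝ :=
  ∑ a, p (a, b)

/-- mutual information of a finite joint distribution -/
noncomputable def mutualInfo {α β : Type*} [Fintype α] [Fintype β] (p : α × β → ℝ) : ℝ :=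
  ∑ a, ∑ b, p (a, b) * Real.log (p (a, b) / (margX p a * margY p b))

/-- Expected InfoNCE loss with `m` candidates: one positive pair `(a, b)` drawn from the
joint `p`, and `m − 1` negatives drawn independently from the marginal of `Z²`, with
critic `h`. -/
noncomputable def expectedInfoNCE {α β : Type*} [Fintype α] [Fintype β]
    (p : α × β → ℝ) (h : α → β → ℝ) (m : ℕ) : ℝ :=
  ∑ a, ∑ b, ∑ ys : Fin (m - 1) → β,
    p (a, b) * (∏ k, margY p (ys k)) *
      (-Real.log (Real.exp (h a b) / (Real.exp (h a b) + ∑ k, Real.exp (h a (ys k)))))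

lemma sum_pi_prod {β : Type*} [Fintype β] (k : ℕ) (q : β → ℝ) :
    ∑ y : Fin k → β, ∏ i, q (y i) = (∑ b, q b) ^ k := by
  rw [← Fin.prod_const k (∑ b, q b), Finset.prod_univ_sum, Fintype.piFinset_univ]

lemma symm_sum {β : Type*} [Fintype β] (n : ℕ) (q : β → ℝ)
    (hq1 : ∑ b, q b = 1) (f : β → ℝ) (hf : ∀ b, 0 < f b) :
    ∑ y : Fin (n+1) → β, (∏ i, q (y i)) * (f (y 0) / ∑ i, f (y i)) = 1/(n+1) := by
  set T : Fin (n+1) → ℝ := fun j => ∑ y : Fin (n+1) → β,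
      (∏ i, q (y i)) * (f (y j) / ∑ i, f (y i)) with hT
  have hTeq : ∀ j, T j = T 0 := by
    intro j
    have hbij : Function.Bijective (fun y : Fin (n+1) → β => y ∘ Equiv.swap 0 j) :=
      (Equiv.arrowCongr (Equiv.swap 0 j) (Equiv.refl β)).symm.bijective
    refine Fintype.sum_bijective _ hbij _ _ ?_
    intro y
    simp only [Function.comp_apply]
    rw [Equiv.prod_comp (Equiv.swap 0 j) (fun i => q (y i)),
        Equiv.sum_comp (Equiv.swap 0 j) (fun i => f (y i)),
        Equiv.swap_apply_left]
  have hsumT : ∑ j, T j = 1 := by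
    rw [hT]
    rw [Finset.sum_comm]
    have : ∀ y : Fin (n+1) → β, ∑ j, (∏ i, q (y i)) * (f (y j) / ∑ i, f (y i))
        = ∏ i, q (y i) := by
      intro y
      have hS : (0:ℝ) < ∑ i, f (y i) := Finset.sum_pos (fun i _ => hf _) ⟨0, Finset.mem_univ _⟩
      rw [← Finset.mul_sum, ← Finset.sum_div, div_self hS.ne', mul_one]
    rw [Finset.sum_congr rfl (fun y _ => this y), sum_pi_prod, hq1, one_pow]
  have h1 : (n+1 : ℝ) * T 0 = 1 := by
    have := hsumT
    rw [Finset.sum_congr rfl (fun j _ => hTeq j), Finset.sum_const, Finset.card_univ,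
      Fintype.card_fin, nsmul_eq_mul] at this
    push_cast at this
    linarith
  have hn : (0:ℝ) < n + 1 := by positivity
  rw [show ∑ y : Fin (n+1) → β, (∏ i, q (y i)) * (f (y 0) / ∑ i, f (y i)) = T 0 from rfl,
    eq_div_iff hn.ne']
  linarith

lemma symm_sum' {β : Type*} [Fintype β] (n : ℕ) (q : β → ℝ)
    (hq1 : ∑ b, q b = 1) (f : β → ℝ) (hf : ∀ b, 0 < f b) :
    ∑ b, ∑ ys : Fin n → β,
      q b * (∏ k, q (ys k)) * (f b / (f b + ∑ k, f (ys k))) = 1/(n+1) := by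
  rw [← symm_sum n q hq1 f hf]
  rw [← Equiv.sum_comp (Fin.consEquiv (fun _ : Fin (n+1) => β)), Fintype.sum_prod_type]
  refine Finset.sum_congr rfl fun b _ => Finset.sum_congr rfl fun ys _ => ?_
  simp [Fin.consEquiv, Fin.prod_univ_succ, Fin.sum_univ_succ]

/-- InfoNCE bound: the expected contrastive loss with `m ≥ 2` candidates
satisfies `E[L_con] ≥ log m − I(Z¹; Z²)`. -/
theorem expected_infoNCE_lower_bound {α β : Type*} [Fintype α] [Fintype β]
    (p : α × β → ℝ) (hp : ∀ ab, 0 ≤ p ab) (hsum : ∑ ab : α × β, p ab = 1)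
    (h : α → β → ℝ) (m : ℕ) (hm : 2 ≤ m) :
    expectedInfoNCE p h m ≥ Real.log m - mutualInfo p := by
  classical
  set q : β → ℝ := margY p with hqdef
  set px : α → ℝ := margX p with hpxdef
  have hq0 : ∀ b, 0 ≤ q b := fun b => Finset.sum_nonneg fun a _ => hp _
  have hpx0 : ∀ a, 0 ≤ px a := fun a => Finset.sum_nonneg fun b _ => hp _
  have hsum' : ∑ a, ∑ b, p (a, b) = 1 := by rw [← Fintype.sum_prod_type]; exact hsum
  have hq1 : ∑ b, q b = 1 := by
    rw [hqdef]; unfold margY; rw [Finset.sum_comm]; exact hsum'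
  have hpx1 : ∑ a, px a = 1 := hsum'
  have hple_px : ∀ a b, p (a, b) ≤ px a := fun a b =>
    Finset.single_le_sum (fun b' _ => hp (a, b')) (Finset.mem_univ b)
  have hple_q : ∀ a b, p (a, b) ≤ q b := fun a b =>
    Finset.single_le_sum (fun a' _ => hp (a', b)) (Finset.mem_univ a)
  have hm0 : (0:ℝ) < m := by positivity
  set S : α → β → (Fin (m-1) → β) → ℝ :=
    fun a b ys => Real.exp (h a b) + ∑ k, Real.exp (h a (ys k)) with hSdef
  have hS : ∀ a b ys, 0 < S a b ys := fun a b ys => by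
    rw [hSdef]; positivity
  set L : α → β → (Fin (m-1) → β) → ℝ := fun a b ys =>
    -Real.log (Real.exp (h a b) / S a b ys)
      + (Real.log (p (a, b) / (px a * q b)) - Real.log m) with hLdef
  set w : α → β → (Fin (m-1) → β) → ℝ := fun a b ys =>
    p (a, b) * ∏ k, q (ys k) with hwdef
  set G : α → β → (Fin (m-1) → β) → ℝ := fun a b ys =>
    (m:ℝ) * px a * (q b * (∏ k, q (ys k)) * (Real.exp (h a b) / S a b ys)) with hGdef
  have hw0 : ∀ a b ys, 0 ≤ w a b ys := fun a b ys =>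
    mul_nonneg (hp _) (Finset.prod_nonneg fun k _ => hq0 _)
  have hG0 : ∀ a b ys, 0 ≤ G a b ys := fun a b ys => by
    have h2 : 0 ≤ ∏ k, q (ys k) := Finset.prod_nonneg fun k _ => hq0 _
    exact mul_nonneg (mul_nonneg hm0.le (hpx0 a))
      (mul_nonneg (mul_nonneg (hq0 b) h2)
        (div_nonneg (Real.exp_pos _).le (hS a b ys).le))
  have key : ∀ a b ys, w a b ys - G a b ys ≤ w a b ys * L a b ys := by
    intro a b ys
    rcases eq_or_lt_of_le (hp (a, b)) with h0 | h0
    · have : w a b ys = 0 := by rw [hwdef]; simp [← h0]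
      rw [this, zero_mul, zero_sub, neg_nonpos]
      exact hG0 a b ys
    · have hpxa : 0 < px a := lt_of_lt_of_le h0 (hple_px a b)
      have hqb : 0 < q b := lt_of_lt_of_le h0 (hple_q a b)
      have hSp := hS a b ys
      set X : ℝ := p (a, b) * S a b ys / (px a * q b * m * Real.exp (h a b)) with hXdef
      have hXpos : 0 < X := by rw [hXdef]; positivity
      have e1 : Real.log (Real.exp (h a b) / S a b ys)
          = h a b - Real.log (S a b ys) := by
        rw [Real.log_div (Real.exp_ne_zero _) hSp.ne', Real.log_exp]
      have e2 : Real.log (p (a, b) / (px a * q b))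
          = Real.log (p (a, b)) - (Real.log (px a) + Real.log (q b)) := by
        rw [Real.log_div h0.ne' (by positivity), Real.log_mul hpxa.ne' hqb.ne']
      have e3 : Real.log X = Real.log (p (a, b)) + Real.log (S a b ys)
          - (Real.log (px a) + Real.log (q b) + Real.log m + h a b) := by
        rw [hXdef, Real.log_div (by positivity) (by positivity),
          Real.log_mul h0.ne' hSp.ne',
          Real.log_mul (by positivity) (Real.exp_ne_zero _),
          Real.log_mul (by positivity) hm0.ne',
          Real.log_mul hpxa.ne' hqb.ne', Real.log_exp]
      have hLX : L a b ys = Real.log X := by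
        simp only [hLdef]
        rw [e1, e2, e3]; ring
      have hlog : 1 - X⁻¹ ≤ L a b ys := by
        rw [hLX]; exact Real.one_sub_inv_le_log_of_pos hXpos
      have step : w a b ys * (1 - X⁻¹) ≤ w a b ys * L a b ys :=
        mul_le_mul_of_nonneg_left hlog (hw0 a b ys)
      refine le_trans (le_of_eq ?_) step
      rw [hwdef, hGdef, hXdef]
      field_simp
  have hsum_w : ∑ a, ∑ b, ∑ ys : Fin (m-1) → β, w a b ys = 1 := by
    have hw1 : ∀ a b, ∑ ys : Fin (m-1) → β, w a b ys = p (a, b) := by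
      intro a b
      rw [hwdef]
      simp only
      rw [← Finset.mul_sum, sum_pi_prod, hq1, one_pow, mul_one]
    simp only [hw1]
    exact hsum'
  have hsum_G : ∑ a, ∑ b, ∑ ys : Fin (m-1) → β, G a b ys = 1 := by
    have inner : ∀ a, ∑ b, ∑ ys : Fin (m-1) → β,
        q b * (∏ k, q (ys k)) * (Real.exp (h a b) / S a b ys) = 1/m := by
      intro a
      have hss := symm_sum' (m-1) q hq1 (fun b => Real.exp (h a b)) (fun b => Real.exp_pos _)
      rw [hss]
      congr 1
      have hc : ((m-1:ℕ):ℝ) + 1 = m := by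
        have h1 : 1 ≤ m := by omega
        push_cast [Nat.cast_sub h1]
        ring
      rw [hc]
    have hGa : ∀ a, ∑ b, ∑ ys : Fin (m-1) → β, G a b ys = px a := by
      intro a
      rw [hGdef]
      simp only
      calc ∑ b, ∑ ys : Fin (m-1) → β,
            (m:ℝ) * px a * (q b * (∏ k, q (ys k)) * (Real.exp (h a b) / S a b ys))
          = (m:ℝ) * px a * ∑ b, ∑ ys : Fin (m-1) → β,
            q b * (∏ k, q (ys k)) * (Real.exp (h a b) / S a b ys) := by
            rw [Finset.mul_sum]
            exact Finset.sum_congr rfl fun b _ => by rw [Finset.mul_sum]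
        _ = (m:ℝ) * px a * (1/m) := by rw [inner a]
        _ = px a := by field_simp
    simp only [hGa]
    exact hpx1
  have hinner : ∀ a b, ∑ ys : Fin (m-1) → β, w a b ys * L a b ys
      = (∑ ys : Fin (m-1) → β, p (a, b) * (∏ k, q (ys k)) *
          (-Real.log (Real.exp (h a b) / S a b ys)))
        + (p (a, b) * Real.log (p (a, b) / (px a * q b)) - p (a, b) * Real.log m) := by
    intro a b
    simp only [hwdef, hLdef]
    simp only [mul_add, mul_sub]
    rw [Finset.sum_add_distrib, Finset.sum_sub_distrib]
    have hconst : ∀ c : ℝ, ∑ ys : Fin (m-1) → β,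
        p (a, b) * (∏ k, q (ys k)) * c = p (a, b) * c := by
      intro c
      calc ∑ ys : Fin (m-1) → β, p (a, b) * (∏ k, q (ys k)) * c
          = (∑ ys : Fin (m-1) → β, ∏ k, q (ys k)) * (p (a, b) * c) := by
            rw [Finset.sum_mul]
            exact Finset.sum_congr rfl fun ys _ => by ring
        _ = p (a, b) * c := by rw [sum_pi_prod, hq1, one_pow, one_mul]
    rw [hconst, hconst]
  have hE : expectedInfoNCE p h m = ∑ a, ∑ b, ∑ ys : Fin (m-1) → β,
      p (a, b) * (∏ k, q (ys k)) * (-Real.log (Real.exp (h a b) / S a b ys)) := rfl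
  have hI : mutualInfo p = ∑ a, ∑ b, p (a, b) * Real.log (p (a, b) / (px a * q b)) := rfl
  have hlogm : ∑ a, ∑ b, p (a, b) * Real.log m = Real.log m := by
    calc ∑ a, ∑ b, p (a, b) * Real.log m
        = (∑ a, ∑ b, p (a, b)) * Real.log m := by
          rw [Finset.sum_mul]
          exact Finset.sum_congr rfl fun a _ => by rw [Finset.sum_mul]
      _ = Real.log m := by rw [hsum', one_mul]
  have goal_eq : ∑ a, ∑ b, ∑ ys : Fin (m-1) → β, w a b ys * L a b ys
      = expectedInfoNCE p h m + mutualInfo p - Real.log m := by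
    calc ∑ a, ∑ b, ∑ ys : Fin (m-1) → β, w a b ys * L a b ys
        = ∑ a, ∑ b, ((∑ ys : Fin (m-1) → β, p (a, b) * (∏ k, q (ys k)) *
              (-Real.log (Real.exp (h a b) / S a b ys)))
            + (p (a, b) * Real.log (p (a, b) / (px a * q b)) - p (a, b) * Real.log m)) :=
          Finset.sum_congr rfl fun a _ => Finset.sum_congr rfl fun b _ => hinner a b
      _ = (∑ a, ∑ b, ∑ ys : Fin (m-1) → β, p (a, b) * (∏ k, q (ys k)) *
              (-Real.log (Real.exp (h a b) / S a b ys)))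
            + ((∑ a, ∑ b, p (a, b) * Real.log (p (a, b) / (px a * q b)))
              - ∑ a, ∑ b, p (a, b) * Real.log m) := by
          simp only [Finset.sum_add_distrib, Finset.sum_sub_distrib]
      _ = expectedInfoNCE p h m + mutualInfo p - Real.log m := by
          rw [← hE, ← hI, hlogm]; ring
  have final : (0:ℝ) ≤ ∑ a, ∑ b, ∑ ys : Fin (m-1) → β, w a b ys * L a b ys := by
    have h1 : ∑ a, ∑ b, ∑ ys : Fin (m-1) → β, (w a b ys - G a b ys)
        ≤ ∑ a, ∑ b, ∑ ys : Fin (m-1) → β, w a b ys * L a b ys :=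
      Finset.sum_le_sum fun a _ => Finset.sum_le_sum fun b _ =>
        Finset.sum_le_sum fun ys _ => key a b ys
    have h2 : ∑ a, ∑ b, ∑ ys : Fin (m-1) → β, (w a b ys - G a b ys) = 0 := by
      simp only [Finset.sum_sub_distrib]
      rw [hsum_w, hsum_G]
      ring
    linarith
  rw [goal_eq] at final
  linarith
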